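/- Let q ∈ ℂ with q ≠ 0 and q² ≠ 1, and let a, b, c, d ∈ ℂ. Set α = a+b, β = −ab, δ = q⁻¹(c+d), ε = −q⁻²cd, and the barred parameters ᾱ = q⁻¹(a+b), β̄ = −q⁻²ab, δ̄ = c+d, ε̄ = −cd. Then, pointwise on every f : ℂ → ℂ at every z ∈ ℂ with z ≠ 0 and q^{2k}z² ≠ 1 for k ∈ {−2,−1,0,1,2}: (αY + βU + V)(δY + εU + V)f(z) − (δ̄Y + ε̄U + V)(ᾱY + β̄U + V)f(z) = (cd − ab)(1 − q⁻²)·f(z). -/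

import Mathlib

noncomputable def Yop (q : ℂ) (f : ℂ → ℂ) (z : ℂ) : ℂ :=
  (f (q * z) - f (q⁻¹ * z)) / (z - z⁻¹)

noncomputable def Uop (q : ℂ) (f : ℂ → ℂ) (z : ℂ) : ℂ :=
  (z * f (q * z) - z⁻¹ * f (q⁻¹ * z)) / (z - z⁻¹)

noncomputable def Vop (q : ℂ) (f : ℂ → ℂ) (z : ℂ) : ℂ :=
  (z * f (q⁻¹ * z) - z⁻¹ * f (q * z)) / (z - z⁻¹)

/-- `M^(α,β,γ) = αY + βU + γV` -/
noncomputable def Mop (q α β γ : ℂ) (f : ℂ → ℂ) : ℂ → ℂ :=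
  fun z => α * Yop q f z + β * Uop q f z + γ * Vop q f z

lemma sub_inv_ne_zero' (w : ℂ) (hw : w ≠ 0) (h2 : w ^ 2 ≠ 1) : w - w⁻¹ ≠ 0 := by
  intro h
  apply h2
  have hw2 : w = w⁻¹ := sub_eq_zero.mp h
  calc w ^ 2 = w * w := sq w
    _ = w * w⁻¹ := by rw [← hw2]
    _ = 1 := mul_inv_cancel₀ hw

lemma Mop_apply (q α β : ℂ) (f : ℂ → ℂ) (z : ℂ) :
    Mop q α β 1 f z
      = (α + β * z - z⁻¹) / (z - z⁻¹) * f (q * z)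
        + (z - α - β * z⁻¹) / (z - z⁻¹) * f (q⁻¹ * z) := by
  simp only [Mop, Yop, Uop, Vop, one_mul]
  ring

set_option maxHeartbeats 8000000 in
/-- the two factorizations of the Askey–Wilson operator differ by
the constant `(cd - ab)(1 - q⁻²)` times the identity. -/
theorem factorization_difference (q : ℂ) (hq : q ≠ 0) (hq2 : q ^ 2 ≠ 1)
    (a b c d : ℂ) (α β δ ε αb βb δb εb : ℂ)
    (hα : α = a + b) (hβ : β = -(a * b))
    (hδ : δ = q⁻¹ * (c + d)) (hε : ε = -(q⁻¹ ^ 2 * c * d))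
    (hαb : αb = q⁻¹ * (a + b)) (hβb : βb = -(q⁻¹ ^ 2 * a * b))
    (hδb : δb = c + d) (hεb : εb = -(c * d))
    (f : ℂ → ℂ) (z : ℂ) (hz : z ≠ 0)
    (h0 : z ^ 2 ≠ 1) (h1 : q ^ 2 * z ^ 2 ≠ 1) (hm1 : q⁻¹ ^ 2 * z ^ 2 ≠ 1)
    (h2 : (q ^ 2) ^ 2 * z ^ 2 ≠ 1) (hm2 : (q⁻¹ ^ 2) ^ 2 * z ^ 2 ≠ 1) :
    Mop q α β 1 (Mop q δ ε 1 f) z - Mop q δb εb 1 (Mop q αb βb 1 f) z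
      = (c * d - a * b) * (1 - q⁻¹ ^ 2) * f z := by
  have hqz : q * z ≠ 0 := mul_ne_zero hq hz
  have hqiz : q⁻¹ * z ≠ 0 := mul_ne_zero (inv_ne_zero hq) hz
  have h1' : (q * z) ^ 2 ≠ 1 := by rwa [mul_pow]
  have hm1' : (q⁻¹ * z) ^ 2 ≠ 1 := by rwa [mul_pow]
  have hd0 : z - z⁻¹ ≠ 0 := sub_inv_ne_zero' z hz h0
  have hd1 : q * z - (q * z)⁻¹ ≠ 0 := sub_inv_ne_zero' _ hqz h1'
  have hdm1 : q⁻¹ * z - (q⁻¹ * z)⁻¹ ≠ 0 := sub_inv_ne_zero' _ hqiz hm1'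
  have e1 : q * (q⁻¹ * z) = z := by field_simp
  have e2 : q⁻¹ * (q * z) = z := by field_simp
  have k1 : z ^ 2 - 1 ≠ 0 := sub_ne_zero.mpr h0
  have k2 : q ^ 2 * z ^ 2 - 1 ≠ 0 := sub_ne_zero.mpr h1
  have k3 : z ^ 2 - q ^ 2 ≠ 0 := by
    intro h
    apply hm1
    rw [sub_eq_zero] at h
    field_simp [h]
    exact h
  rw [Mop_apply q α β (Mop q δ ε 1 f) z, Mop_apply q δb εb (Mop q αb βb 1 f) z,
    Mop_apply q δ ε f (q * z), Mop_apply q δ ε f (q⁻¹ * z),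
    Mop_apply q αb βb f (q * z), Mop_apply q αb βb f (q⁻¹ * z), e1, e2]
  subst hα hβ hδ hε hαb hβb hδb hεb
  generalize f (q * (q * z)) = A
  generalize f z = B
  generalize f (q⁻¹ * (q⁻¹ * z)) = C
  -- coefficient identities
  have hA : ((a + b) + -(a * b) * z - z⁻¹) / (z - z⁻¹)
        * ((q⁻¹ * (c + d) + -(q⁻¹ ^ 2 * c * d) * (q * z) - (q * z)⁻¹) / (q * z - (q * z)⁻¹))
      - ((c + d) + -(c * d) * z - z⁻¹) / (z - z⁻¹)
        * ((q⁻¹ * (a + b) + -(q⁻¹ ^ 2 * a * b) * (q * z) - (q * z)⁻¹) / (q * z - (q * z)⁻¹))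
      = 0 := by
    rw [div_mul_div_comm, div_mul_div_comm, div_sub_div _ _ (mul_ne_zero hd0 hd1) (mul_ne_zero hd0 hd1),
      div_eq_zero_iff]
    left
    field_simp
    ring
  have hC : (z - (a + b) - -(a * b) * z⁻¹) / (z - z⁻¹)
        * ((q⁻¹ * z - (q⁻¹ * (c + d)) - -(q⁻¹ ^ 2 * c * d) * (q⁻¹ * z)⁻¹) / (q⁻¹ * z - (q⁻¹ * z)⁻¹))
      - (z - (c + d) - -(c * d) * z⁻¹) / (z - z⁻¹)
        * ((q⁻¹ * z - (q⁻¹ * (a + b)) - -(q⁻¹ ^ 2 * a * b) * (q⁻¹ * z)⁻¹) / (q⁻¹ * z - (q⁻¹ * z)⁻¹))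
      = 0 := by
    rw [div_mul_div_comm, div_mul_div_comm, div_sub_div _ _ (mul_ne_zero hd0 hdm1) (mul_ne_zero hd0 hdm1),
      div_eq_zero_iff]
    left
    field_simp
    ring
  have hB : ((a + b) + -(a * b) * z - z⁻¹) / (z - z⁻¹)
        * ((q * z - (q⁻¹ * (c + d)) - -(q⁻¹ ^ 2 * c * d) * (q * z)⁻¹) / (q * z - (q * z)⁻¹))
      + (z - (a + b) - -(a * b) * z⁻¹) / (z - z⁻¹)
        * ((q⁻¹ * (c + d) + -(q⁻¹ ^ 2 * c * d) * (q⁻¹ * z) - (q⁻¹ * z)⁻¹) / (q⁻¹ * z - (q⁻¹ * z)⁻¹))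
      - ((c + d) + -(c * d) * z - z⁻¹) / (z - z⁻¹)
        * ((q * z - (q⁻¹ * (a + b)) - -(q⁻¹ ^ 2 * a * b) * (q * z)⁻¹) / (q * z - (q * z)⁻¹))
      - (z - (c + d) - -(c * d) * z⁻¹) / (z - z⁻¹)
        * ((q⁻¹ * (a + b) + -(q⁻¹ ^ 2 * a * b) * (q⁻¹ * z) - (q⁻¹ * z)⁻¹) / (q⁻¹ * z - (q⁻¹ * z)⁻¹))
      = (c * d - a * b) * (1 - q⁻¹ ^ 2) := by
    have Pab : ((a + b) + -(a * b) * z - z⁻¹) / (z - z⁻¹)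
        = ((a + b) * z - a * b * z ^ 2 - 1) / (z ^ 2 - 1) := by
      rw [div_eq_div_iff hd0 k1]; field_simp; ring
    have Qab : (z - (a + b) - -(a * b) * z⁻¹) / (z - z⁻¹)
        = (z ^ 2 - (a + b) * z + a * b) / (z ^ 2 - 1) := by
      rw [div_eq_div_iff hd0 k1]; field_simp; ring
    have Pcd : ((c + d) + -(c * d) * z - z⁻¹) / (z - z⁻¹)
        = ((c + d) * z - c * d * z ^ 2 - 1) / (z ^ 2 - 1) := by
      rw [div_eq_div_iff hd0 k1]; field_simp; ring
    have Qcd : (z - (c + d) - -(c * d) * z⁻¹) / (z - z⁻¹)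
        = (z ^ 2 - (c + d) * z + c * d) / (z ^ 2 - 1) := by
      rw [div_eq_div_iff hd0 k1]; field_simp; ring
    have Qde : (q * z - (q⁻¹ * (c + d)) - -(q⁻¹ ^ 2 * c * d) * (q * z)⁻¹) / (q * z - (q * z)⁻¹)
        = (q ^ 2 * z ^ 2 - (c + d) * z + q⁻¹ ^ 2 * c * d) / (q ^ 2 * z ^ 2 - 1) := by
      rw [div_eq_div_iff hd1 k2]; field_simp; ring
    have hzi : z * z⁻¹ = 1 := mul_inv_cancel₀ hz
    have hqi : q * q⁻¹ = 1 := mul_inv_cancel₀ hq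
    have hdd : q⁻¹ * z - (q⁻¹ * z)⁻¹ = (z ^ 2 - q ^ 2) * (q⁻¹ * z⁻¹) := by
      field_simp
    have Pde : (q⁻¹ * (c + d) + -(q⁻¹ ^ 2 * c * d) * (q⁻¹ * z) - (q⁻¹ * z)⁻¹) / (q⁻¹ * z - (q⁻¹ * z)⁻¹)
        = ((c + d) * z - q⁻¹ ^ 2 * c * d * z ^ 2 - q ^ 2) / (z ^ 2 - q ^ 2) := by
      have hn : q⁻¹ * (c + d) + -(q⁻¹ ^ 2 * c * d) * (q⁻¹ * z) - (q⁻¹ * z)⁻¹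
          = ((c + d) * z - q⁻¹ ^ 2 * c * d * z ^ 2 - q ^ 2) * (q⁻¹ * z⁻¹) := by
        rw [mul_inv, inv_inv]
        linear_combination (q⁻¹ ^ 3 * c * d * z - q⁻¹ * (c + d)) * hzi + q * z⁻¹ * hqi
      rw [hn, hdd, mul_div_mul_right _ _ (mul_ne_zero (inv_ne_zero hq) (inv_ne_zero hz))]
    have Qal : (q * z - (q⁻¹ * (a + b)) - -(q⁻¹ ^ 2 * a * b) * (q * z)⁻¹) / (q * z - (q * z)⁻¹)
        = (q ^ 2 * z ^ 2 - (a + b) * z + q⁻¹ ^ 2 * a * b) / (q ^ 2 * z ^ 2 - 1) := by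
      rw [div_eq_div_iff hd1 k2]; field_simp; ring
    have Pal : (q⁻¹ * (a + b) + -(q⁻¹ ^ 2 * a * b) * (q⁻¹ * z) - (q⁻¹ * z)⁻¹) / (q⁻¹ * z - (q⁻¹ * z)⁻¹)
        = ((a + b) * z - q⁻¹ ^ 2 * a * b * z ^ 2 - q ^ 2) / (z ^ 2 - q ^ 2) := by
      have hn : q⁻¹ * (a + b) + -(q⁻¹ ^ 2 * a * b) * (q⁻¹ * z) - (q⁻¹ * z)⁻¹
          = ((a + b) * z - q⁻¹ ^ 2 * a * b * z ^ 2 - q ^ 2) * (q⁻¹ * z⁻¹) := by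
        rw [mul_inv, inv_inv]
        linear_combination (q⁻¹ ^ 3 * a * b * z - q⁻¹ * (a + b)) * hzi + q * z⁻¹ * hqi
      rw [hn, hdd, mul_div_mul_right _ _ (mul_ne_zero (inv_ne_zero hq) (inv_ne_zero hz))]
    rw [Pab, Qab, Pcd, Qcd, Qde, Pde, Qal, Pal]
    have hD1 : (z ^ 2 - 1) * (q ^ 2 * z ^ 2 - 1) ≠ 0 := mul_ne_zero k1 k2
    have hD2 : (z ^ 2 - 1) * (z ^ 2 - q ^ 2) ≠ 0 := mul_ne_zero k1 k3
    rw [div_mul_div_comm, div_mul_div_comm, div_mul_div_comm, div_mul_div_comm,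
      div_add_div _ _ hD1 hD2, div_sub_div _ _ (mul_ne_zero hD1 hD2) hD1,
      div_sub_div _ _ (mul_ne_zero (mul_ne_zero hD1 hD2) hD1) hD2,
      div_eq_iff (mul_ne_zero (mul_ne_zero (mul_ne_zero hD1 hD2) hD1) hD2)]
    field_simp
    ring
  linear_combination A * hA + B * hB + C * hC
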